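/- Gaussian expectation identity (perpendicular component, mixture of regressions). Let Z₁, Z₂, Z₃ be independent standard normal random variables, let α > 0, β ≥ 0, σ ≥ 0, and set ρ = β/α. Then E[ Z₂ · sign(αZ₁ + βZ₂) · |Z₁ + σZ₃| ] = (2/π)·ρ·√(ρ² + σ² + σ²ρ²)/(1 + ρ²). -/

import Mathlib

open MeasureTheory ProbabilityTheory
open Real Filter Set
open scoped ENNReal NNReal

/-- `sign(v) = 1` if `v ≥ 0` and `−1` otherwise. -/
noncomputable def sgn (v : ℝ) : ℝ := if 0 ≤ v then 1 else -1



lemma int_Ioi {b : ℝ} (hb : 0 < b) (t : ℝ) :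
    ∫ x in Set.Ioi t, x * rexp (-b * x ^ 2) = rexp (-b * t ^ 2) / (2 * b) := by
  have hderiv : ∀ x : ℝ, HasDerivAt (fun y : ℝ => rexp (-b * y ^ 2) / (-(2*b)))
      (x * rexp (-b * x ^ 2)) x := by
    intro x
    have h1 : HasDerivAt (fun y : ℝ => -b * y ^ 2) (-b * (2 * x)) x := by
      simpa using (hasDerivAt_pow 2 x).const_mul (-b)
    have h2 := (h1.exp).div_const (-(2*b))
    refine h2.congr_deriv ?_
    have hb0 : b ≠ 0 := hb.ne'
    rw [div_eq_iff (by simpa using hb0)]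
    ring
  have htend : Tendsto (fun y : ℝ => rexp (-b * y ^ 2) / (-(2*b))) atTop (nhds 0) := by
    have h1 : Tendsto (fun y : ℝ => -b * y ^ 2) atTop atBot := by
      refine Tendsto.const_mul_atTop_of_neg (neg_lt_zero.mpr hb) ?_
      exact tendsto_pow_atTop (by norm_num)
    have := (Real.tendsto_exp_atBot.comp h1).div_const (-(2*b))
    simpa using this
  have := integral_Ioi_of_hasDerivAt_of_tendsto
    (f := fun y : ℝ => rexp (-b * y ^ 2) / (-(2*b)))
    (f' := fun x => x * rexp (-b * x ^ 2)) (a := t)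
    (hderiv t |>.continuousAt.continuousWithinAt)
    (fun x _ => hderiv x)
    ((integrable_mul_exp_neg_mul_sq hb).integrableOn)
    htend
  rw [this]
  field_simp
  ring

lemma int_odd (b : ℝ) : ∫ x : ℝ, x * rexp (-b * x ^ 2) = 0 := by
  have h := integral_neg_eq_self (fun x : ℝ => x * rexp (-b * x ^ 2)) (volume : Measure ℝ)
  simp only [neg_sq, neg_mul, integral_neg] at h
  have h2 : ∫ x : ℝ, x * rexp (-(b * x ^ 2)) = 0 := by linarith
  simpa [neg_mul] using h2

lemma int_abs {b : ℝ} (hb : 0 < b) : ∫ x : ℝ, |x| * rexp (-b * x ^ 2) = 1 / b := by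
  have hi : Integrable (fun x : ℝ => |x| * rexp (-b * x ^ 2)) := by
    have := (integrable_mul_exp_neg_mul_sq hb).abs
    refine this.congr ?_
    filter_upwards with x
    rw [abs_mul, abs_of_pos (exp_pos _)]
  rw [← intervalIntegral.integral_Iic_add_Ioi (b := (0:ℝ)) hi.integrableOn hi.integrableOn]
  have h1 : ∫ x in Set.Iic (0:ℝ), |x| * rexp (-b * x ^ 2)
      = ∫ x in Set.Ioi (0:ℝ), |x| * rexp (-b * x ^ 2) := by
    rw [← neg_zero, ← integral_comp_neg_Iic]
    simp [neg_zero]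
  rw [h1]
  have h2 : ∫ x in Set.Ioi (0:ℝ), |x| * rexp (-b * x ^ 2)
      = ∫ x in Set.Ioi (0:ℝ), x * rexp (-b * x ^ 2) := by
    refine setIntegral_congr_fun measurableSet_Ioi (fun x hx => ?_)
    rw [abs_of_pos hx]
  rw [h2, int_Ioi hb 0]
  norm_num
  ring



lemma measurable_sgn : Measurable sgn := by
  unfold sgn
  exact Measurable.ite (measurableSet_le measurable_const measurable_id) measurable_const
    measurable_const

lemma abs_sgn (v : ℝ) : |sgn v| = 1 := by
  unfold sgn; split <;> simp

lemma pdf_eq (x : ℝ) :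
    gaussianPDFReal 0 1 x = (Real.sqrt (2 * π))⁻¹ * rexp (-(2⁻¹) * x ^ 2) := by
  simp only [gaussianPDFReal, NNReal.coe_one, mul_one, sub_zero]
  congr 2
  ring

lemma integral_g1 (f : ℝ → ℝ) :
    ∫ x, f x ∂(gaussianReal 0 1) = ∫ x, gaussianPDFReal 0 1 x * f x := by
  rw [gaussianReal_of_var_ne_zero 0 one_ne_zero]
  have hm : Measurable fun x => (gaussianPDFReal 0 1 x).toNNReal :=
    (measurable_gaussianPDFReal 0 1).real_toNNReal
  have hpdf : gaussianPDF 0 1 = fun x => ((gaussianPDFReal 0 1 x).toNNReal : ℝ≥0∞) := rfl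
  rw [hpdf, integral_withDensity_eq_integral_smul hm f]
  congr 1
  ext x
  rw [NNReal.smul_def, smul_eq_mul, Real.coe_toNNReal _ (gaussianPDFReal_nonneg 0 1 x)]

lemma integrable_g1_iff (f : ℝ → ℝ) :
    Integrable f (gaussianReal 0 1) ↔
      Integrable (fun x => gaussianPDFReal 0 1 x * f x) (volume : Measure ℝ) := by
  rw [gaussianReal_of_var_ne_zero 0 one_ne_zero]
  have hm : Measurable fun x => (gaussianPDFReal 0 1 x).toNNReal :=
    (measurable_gaussianPDFReal 0 1).real_toNNReal
  have hpdf : gaussianPDF 0 1 = fun x => ((gaussianPDFReal 0 1 x).toNNReal : ℝ≥0∞) := rfl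
  rw [hpdf, integrable_withDensity_iff_integrable_smul hm]
  constructor <;> intro h <;> refine h.congr ?_ <;> filter_upwards with x <;>
    rw [NNReal.smul_def, smul_eq_mul, Real.coe_toNNReal _ (gaussianPDFReal_nonneg 0 1 x)]

lemma integrable_abs_g1 : Integrable (fun y : ℝ => |y|) (gaussianReal 0 1) := by
  rw [integrable_g1_iff]
  have : (fun x : ℝ => gaussianPDFReal 0 1 x * |x|)
      = fun x => (Real.sqrt (2 * π))⁻¹ * |x * rexp (-(2⁻¹) * x ^ 2)| := by
    ext x
    rw [pdf_eq, abs_mul, abs_of_pos (exp_pos _)]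
    ring
  rw [this]
  exact ((integrable_mul_exp_neg_mul_sq (by norm_num)).abs.const_mul _)

lemma integrable_id_g1' : Integrable (fun y : ℝ => y) (gaussianReal 0 1) := by
  refine integrable_abs_g1.mono' aestronglyMeasurable_id ?_
  filter_upwards with y
  simp

lemma mean_g1 : ∫ y, y ∂(gaussianReal 0 1) = 0 := by
  rw [integral_g1]
  have : (fun x : ℝ => gaussianPDFReal 0 1 x * x)
      = fun x => (Real.sqrt (2 * π))⁻¹ * (x * rexp (-(2⁻¹) * x ^ 2)) := by
    ext x; rw [pdf_eq]; ring
  rw [this, integral_const_mul, int_odd, mul_zero]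

lemma integrable_mul_sgn_g1 (c d : ℝ) :
    Integrable (fun y : ℝ => y * sgn (c + d * y)) (gaussianReal 0 1) := by
  refine integrable_abs_g1.mono' ?_ ?_
  · exact (measurable_id.mul (measurable_sgn.comp
      (measurable_const.add (measurable_const.mul measurable_id)))).aestronglyMeasurable
  · filter_upwards with y
    rw [Real.norm_eq_abs, abs_mul, abs_sgn, mul_one]

lemma int_sgn (t : ℝ) :
    ∫ y, y * sgn (y - t) ∂(gaussianReal 0 1)
      = 2 * (Real.sqrt (2 * π))⁻¹ * rexp (-(2⁻¹) * t ^ 2) := by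
  rw [integral_g1]
  set v : ℝ → ℝ := fun y => (Real.sqrt (2 * π))⁻¹ * (y * rexp (-(2⁻¹) * y ^ 2)) with hv
  have hvi : Integrable v := ((integrable_mul_exp_neg_mul_sq (by norm_num)).const_mul _)
  have hvind : Integrable ((Set.Ici t).indicator v) := hvi.indicator measurableSet_Ici
  have key : (fun y => gaussianPDFReal 0 1 y * (y * sgn (y - t)))
      = fun y => 2 * (Set.Ici t).indicator v y - v y := by
    ext y
    rw [pdf_eq]
    unfold sgn
    by_cases h : t ≤ y
    · rw [Set.indicator_of_mem (Set.mem_Ici.mpr h) v, if_pos (by linarith)]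
      simp only [hv]; ring
    · rw [Set.indicator_of_notMem (by simpa using h) v, if_neg (by intro hc; exact h (by linarith))]
      simp only [hv]; ring
  rw [key, integral_sub ((hvind.const_mul 2)) hvi, integral_const_mul,
    integral_indicator measurableSet_Ici]
  have hv0 : ∫ y, v y = 0 := by
    rw [hv, integral_const_mul, int_odd, mul_zero]
  have hIci : ∫ y in Set.Ici t, v y = (Real.sqrt (2 * π))⁻¹ * rexp (-(2⁻¹) * t ^ 2) := by
    rw [integral_Ici_eq_integral_Ioi, hv]
    simp_rw [integral_const_mul]
    rw [int_Ioi (by norm_num : (0:ℝ) < 2⁻¹) t]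
    norm_num
  rw [hv0, hIci]
  ring

lemma g_eval {α β : ℝ} (hβp : 0 < β) (x : ℝ) :
    ∫ y, y * sgn (α * x + β * y) ∂(gaussianReal 0 1)
      = 2 * (Real.sqrt (2 * π))⁻¹ * rexp (-(2⁻¹) * (α * x / β) ^ 2) := by
  set t : ℝ := -(α * x) / β with ht
  have hiff : ∀ y : ℝ, (0 ≤ α * x + β * y) ↔ (0 ≤ y - t) := by
    intro y
    rw [sub_nonneg, ht, div_le_iff₀ hβp]
    constructor <;> intro h <;> nlinarith
  have hsgn : ∀ y : ℝ, sgn (α * x + β * y) = sgn (y - t) := by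
    intro y
    unfold sgn
    rw [if_congr (hiff y) rfl rfl]
  simp_rw [hsgn]
  rw [int_sgn t]
  congr 2
  rw [ht]
  ring

lemma integrable_abs_shift_g1 (x σ : ℝ) :
    Integrable (fun z : ℝ => |x + σ * z|) (gaussianReal 0 1) := by
  have h1 : Integrable (fun z : ℝ => |x| + |σ| * |z|) (gaussianReal 0 1) :=
    (integrable_const _).add (integrable_abs_g1.const_mul _)
  refine h1.mono' ?_ ?_
  · exact ((measurable_const.add (measurable_const.mul measurable_id)).abs).aestronglyMeasurable
  · filter_upwards with z
    rw [Real.norm_eq_abs, abs_abs]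
    calc |x + σ * z| ≤ |x| + |σ * z| := abs_add_le _ _
    _ = |x| + |σ| * |z| := by rw [abs_mul]

lemma h_eval {σ : ℝ} (hσp : 0 < σ) (x : ℝ) :
    ∫ z, |x + σ * z| ∂(gaussianReal 0 1)
      = (Real.sqrt (2 * π))⁻¹ * σ⁻¹
          * ∫ u : ℝ, rexp (-(2⁻¹) * ((u - x) / σ) ^ 2) * |u| := by
  rw [integral_g1]
  set G : ℝ → ℝ := fun w => rexp (-(2⁻¹) * (w / σ) ^ 2) * |x + w| with hG
  have h1 : ∀ z, gaussianPDFReal 0 1 z * |x + σ * z| = (Real.sqrt (2 * π))⁻¹ * G (σ * z) := by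
    intro z
    rw [pdf_eq, hG]
    simp only
    rw [mul_div_cancel_left₀ _ hσp.ne']
    ring
  simp_rw [h1]
  rw [integral_const_mul, Measure.integral_comp_mul_left G σ,
    abs_of_pos (inv_pos.mpr hσp), smul_eq_mul]
  have h2 : ∫ w, G w = ∫ u, G (u - x) := (integral_sub_right_eq_self G x).symm
  have h3 : ∀ u : ℝ, G (u - x) = rexp (-(2⁻¹) * ((u - x) / σ) ^ 2) * |u| := by
    intro u
    rw [hG]
    simp only
    have : x + (u - x) = u := by ring
    rw [this]
  rw [h2]
  simp_rw [h3]
  ring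

lemma inner_gauss (D m : ℝ) : ∫ x : ℝ, rexp (-D * (x - m) ^ 2) = Real.sqrt (π / D) := by
  rw [integral_sub_right_eq_self (fun x => rexp (-D * x ^ 2)) m, integral_gaussian]

lemma swap_integrable {K b : ℝ} (hK : 0 < K) (hb : 0 < b) :
    Integrable (fun p : ℝ × ℝ => rexp (-K * p.1 ^ 2) * (rexp (-b * (p.2 - p.1) ^ 2) * |p.2|))
      ((volume : Measure ℝ).prod volume) := by
  set Kf : ℝ × ℝ → ℝ := fun p => rexp (-K * p.1 ^ 2) * (rexp (-b * p.2 ^ 2) * |p.2 + p.1|)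
    with hKf
  have hKm : Measurable Kf := by
    apply Measurable.mul
    · exact (Real.measurable_exp.comp ((measurable_fst.pow_const 2).const_mul (-K)))
    · exact (Real.measurable_exp.comp ((measurable_snd.pow_const 2).const_mul (-b))).mul
        ((measurable_snd.add measurable_fst).abs)
  have t1 : Integrable (fun p : ℝ × ℝ => rexp (-K * p.1 ^ 2) * (rexp (-b * p.2 ^ 2) * |p.2|))
      ((volume : Measure ℝ).prod volume) := by
    have hb2 : Integrable (fun y : ℝ => rexp (-b * y ^ 2) * |y|) := by
      refine (integrable_mul_exp_neg_mul_sq hb).abs.congr ?_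
      filter_upwards with y
      rw [abs_mul, abs_of_pos (exp_pos _), mul_comm]
    exact (integrable_exp_neg_mul_sq hK).mul_prod hb2
  have t2 : Integrable (fun p : ℝ × ℝ => (|p.1| * rexp (-K * p.1 ^ 2)) * rexp (-b * p.2 ^ 2))
      ((volume : Measure ℝ).prod volume) := by
    have hK2 : Integrable (fun y : ℝ => |y| * rexp (-K * y ^ 2)) := by
      refine (integrable_mul_exp_neg_mul_sq hK).abs.congr ?_
      filter_upwards with y
      rw [abs_mul, abs_of_pos (exp_pos _)]
    exact hK2.mul_prod (integrable_exp_neg_mul_sq hb)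
  have hKi : Integrable Kf ((volume : Measure ℝ).prod volume) := by
    refine (t1.add t2).mono' hKm.aestronglyMeasurable ?_
    filter_upwards with p
    rw [Real.norm_eq_abs, hKf]
    simp only
    have e1 := exp_pos (-K * p.1 ^ 2)
    have e2 := exp_pos (-b * p.2 ^ 2)
    have h3 : |p.2 + p.1| ≤ |p.2| + |p.1| := abs_add_le _ _
    rw [abs_of_nonneg (by positivity)]
    simp only [Pi.add_apply]
    have key := mul_le_mul_of_nonneg_left h3 (le_of_lt (mul_pos e1 e2))
    nlinarith [key]
  have hΨ : MeasurePreserving (fun p : ℝ × ℝ => (p.1, -p.1 + p.2))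
      ((volume : Measure ℝ).prod volume) ((volume : Measure ℝ).prod volume) :=
    measurePreserving_prod_neg_add (volume : Measure ℝ) (volume : Measure ℝ)
  have hcomp : Integrable (Kf ∘ fun p : ℝ × ℝ => (p.1, -p.1 + p.2))
      ((volume : Measure ℝ).prod volume) :=
    (hΨ.integrable_comp hKm.aestronglyMeasurable).mpr hKi
  refine hcomp.congr ?_
  filter_upwards with p
  simp only [Function.comp, hKf]
  have h1 : -p.1 + p.2 = p.2 - p.1 := by ring
  have h2 : -p.1 + p.2 + p.1 = p.2 := by ring
  rw [h1]
  congr 2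
  rw [← h1, h2]

lemma main_integrable (α β σ : ℝ) (hσ : 0 ≤ σ) :
    Integrable (fun z : ℝ × ℝ × ℝ => z.2.1 * sgn (α * z.1 + β * z.2.1) * |z.1 + σ * z.2.2|)
      ((gaussianReal 0 1).prod ((gaussianReal 0 1).prod (gaussianReal 0 1))) := by
  set μ : Measure ℝ := gaussianReal 0 1 with hμ
  have t1 : Integrable (fun z : ℝ × ℝ × ℝ => |z.1| * (|z.2.1| * 1)) (μ.prod (μ.prod μ)) :=
    integrable_abs_g1.mul_prod (integrable_abs_g1.mul_prod (integrable_const 1))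
  have t2 : Integrable (fun z : ℝ × ℝ × ℝ => (1:ℝ) * (|z.2.1| * |z.2.2|)) (μ.prod (μ.prod μ)) :=
    (integrable_const 1).mul_prod (integrable_abs_g1.mul_prod integrable_abs_g1)
  have hbound : Integrable
      (fun z : ℝ × ℝ × ℝ => |z.1| * (|z.2.1| * 1) + σ * ((1:ℝ) * (|z.2.1| * |z.2.2|)))
      (μ.prod (μ.prod μ)) := t1.add (t2.const_mul σ)
  refine hbound.mono' ?_ ?_
  · refine Measurable.aestronglyMeasurable ?_
    refine Measurable.mul (Measurable.mul ?_ ?_) ?_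
    · exact measurable_fst.comp measurable_snd
    · exact measurable_sgn.comp ((measurable_const.mul measurable_fst).add
        (measurable_const.mul (measurable_fst.comp measurable_snd)))
    · exact (measurable_fst.add (measurable_const.mul
        (measurable_snd.comp measurable_snd))).abs
  · filter_upwards with z
    rw [Real.norm_eq_abs, abs_mul, abs_mul, abs_sgn, mul_one, abs_abs]
    have h1 : |z.1 + σ * z.2.2| ≤ |z.1| + σ * |z.2.2| := by
      calc |z.1 + σ * z.2.2| ≤ |z.1| + |σ * z.2.2| := abs_add_le _ _
      _ = |z.1| + σ * |z.2.2| := by rw [abs_mul, abs_of_nonneg hσ]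
    have h2 := mul_le_mul_of_nonneg_left h1 (abs_nonneg z.2.1)
    nlinarith [abs_nonneg z.1, abs_nonneg z.2.1, abs_nonneg z.2.2]

lemma two_inv_sqrt : 2 * (Real.sqrt (2 * π))⁻¹ * (Real.sqrt (2 * π))⁻¹ = π⁻¹ := by
  rw [mul_assoc, ← mul_inv, Real.mul_self_sqrt (by positivity), mul_inv]
  ring


/-- Gaussian expectation identity (perpendicular component, mixture of regressions):
`E[ Z₂ · sign(αZ₁ + βZ₂) · |Z₁ + σZ₃| ] = (2/π) ρ √(ρ² + σ² + σ²ρ²)/(1 + ρ²)`,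
with `ρ = β/α`. -/
theorem gaussian_identity_perpendicular_mixture (α β σ : ℝ) (hα : 0 < α) (hβ : 0 ≤ β)
    (hσ : 0 ≤ σ) :
    (∫ z : ℝ × ℝ × ℝ, z.2.1 * sgn (α * z.1 + β * z.2.1) * |z.1 + σ * z.2.2|
        ∂((gaussianReal 0 1).prod ((gaussianReal 0 1).prod (gaussianReal 0 1)))) =
      2 / Real.pi * (β / α) * Real.sqrt ((β / α) ^ 2 + σ ^ 2 + σ ^ 2 * (β / α) ^ 2)
        / (1 + (β / α) ^ 2) := by
  have hint := main_integrable α β σ hσ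
  rw [MeasureTheory.integral_prod _ hint]
  have hfact : ∀ x : ℝ,
      (∫ p : ℝ × ℝ, (x, p).2.1 * sgn (α * (x, p).1 + β * (x, p).2.1)
          * |(x, p).1 + σ * (x, p).2.2| ∂((gaussianReal 0 1).prod (gaussianReal 0 1)))
      = (∫ y, y * sgn (α * x + β * y) ∂(gaussianReal 0 1))
          * (∫ z, |x + σ * z| ∂(gaussianReal 0 1)) := by
    intro x
    rw [← integral_prod_mul (f := fun y => y * sgn (α * x + β * y))
      (g := fun z => |x + σ * z|)]
  simp_rw [hfact]
  by_cases hβ0 : β = 0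
  · subst hβ0
    simp only [zero_mul, add_zero]
    have hz : ∀ x : ℝ, (∫ y, y * sgn (α * x) ∂(gaussianReal 0 1)) = 0 := by
      intro x
      rw [MeasureTheory.integral_mul_const, mean_g1, zero_mul]
    simp_rw [hz, zero_mul, integral_zero, zero_div]
    simp
  · have hβp : 0 < β := lt_of_le_of_ne hβ (Ne.symm hβ0)
    simp_rw [g_eval hβp]
    by_cases hσ0 : σ = 0
    · -- σ = 0 case
      subst hσ0
      simp only [zero_mul, add_zero]
      have hconst : ∀ x : ℝ, (∫ _ : ℝ, |x| ∂(gaussianReal 0 1)) = |x| := by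
        intro x
        rw [integral_const]
        simp
      simp_rw [hconst]
      rw [integral_g1]
      set K : ℝ := (1 + (α / β) ^ 2) * 2⁻¹ with hK
      have hKpos : 0 < K := by rw [hK]; positivity
      have hpoint : ∀ x : ℝ, gaussianPDFReal 0 1 x
          * (2 * (Real.sqrt (2 * π))⁻¹ * rexp (-(2⁻¹) * (α * x / β) ^ 2) * |x|)
          = π⁻¹ * (|x| * rexp (-K * x ^ 2)) := by
        intro x
        rw [pdf_eq]
        have hexp : rexp (-(2⁻¹) * x ^ 2) * rexp (-(2⁻¹) * (α * x / β) ^ 2)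
            = rexp (-K * x ^ 2) := by
          rw [← Real.exp_add]
          congr 1
          rw [hK]
          field_simp
          ring
        rw [← hexp, ← two_inv_sqrt]
        ring
      simp_rw [hpoint]
      rw [integral_const_mul, int_abs hKpos]
      rw [hK]
      have hsq : Real.sqrt ((β / α) ^ 2 + 0 ^ 2 + 0 ^ 2 * (β / α) ^ 2) = β / α := by
        rw [show (β / α) ^ 2 + 0 ^ 2 + 0 ^ 2 * (β / α) ^ 2 = (β / α) ^ 2 by ring]
        exact Real.sqrt_sq (by positivity)
      rw [hsq]
      field_simp
      ring
    · -- σ > 0 case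
      have hσp : 0 < σ := lt_of_le_of_ne hσ (Ne.symm hσ0)
      simp_rw [h_eval hσp]
      rw [integral_g1]
      set K : ℝ := (1 + (α / β) ^ 2) * 2⁻¹ with hK
      set b : ℝ := 2⁻¹ / σ ^ 2 with hb
      set D : ℝ := K + b with hD
      set L : ℝ := K * b / D with hL
      have hKpos : 0 < K := by rw [hK]; positivity
      have hbpos : 0 < b := by rw [hb]; exact div_pos (by norm_num) (pow_pos hσp 2)
      have hDpos : 0 < D := by rw [hD]; exact add_pos hKpos hbpos
      have hLpos : 0 < L := by rw [hL]; exact div_pos (mul_pos hKpos hbpos) hDpos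
      have hpoint : ∀ x : ℝ, gaussianPDFReal 0 1 x
          * (2 * (Real.sqrt (2 * π))⁻¹ * rexp (-(2⁻¹) * (α * x / β) ^ 2)
            * ((Real.sqrt (2 * π))⁻¹ * σ⁻¹
              * ∫ u : ℝ, rexp (-(2⁻¹) * ((u - x) / σ) ^ 2) * |u|))
          = π⁻¹ * σ⁻¹ * (Real.sqrt (2 * π))⁻¹
              * ∫ u : ℝ, rexp (-K * x ^ 2) * (rexp (-b * (u - x) ^ 2) * |u|) := by
        intro x
        have hexp2 : ∀ u : ℝ, -(2⁻¹) * ((u - x) / σ) ^ 2 = -b * (u - x) ^ 2 := by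
          intro u
          rw [hb]
          ring
        simp_rw [hexp2]
        rw [pdf_eq, integral_const_mul]
        have hexp : rexp (-K * x ^ 2) = rexp (-(2⁻¹) * x ^ 2)
            * rexp (-(2⁻¹) * (α * x / β) ^ 2) := by
          rw [← Real.exp_add]
          congr 1
          rw [hK]
          field_simp
          ring
        rw [hexp, ← two_inv_sqrt]
        ring
      simp_rw [hpoint]
      rw [integral_const_mul]
      have hswap := MeasureTheory.integral_integral_swap
        (f := fun x u => rexp (-K * x ^ 2) * (rexp (-b * (u - x) ^ 2) * |u|))
        (swap_integrable hKpos hbpos)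
      rw [hswap]
      have hinner : ∀ u : ℝ,
          (∫ x : ℝ, rexp (-K * x ^ 2) * (rexp (-b * (u - x) ^ 2) * |u|))
            = (rexp (-L * u ^ 2) * |u|) * Real.sqrt (π / D) := by
        intro u
        have hsq : ∀ x : ℝ, rexp (-K * x ^ 2) * (rexp (-b * (u - x) ^ 2) * |u|)
            = (rexp (-L * u ^ 2) * |u|) * rexp (-D * (x - b * u / D) ^ 2) := by
          intro x
          have harg : -K * x ^ 2 + -b * (u - x) ^ 2
              = -L * u ^ 2 + -D * (x - b * u / D) ^ 2 := by
            rw [hL, hD, hb, hK]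
            field_simp
            ring
          calc rexp (-K * x ^ 2) * (rexp (-b * (u - x) ^ 2) * |u|)
              = rexp (-K * x ^ 2 + -b * (u - x) ^ 2) * |u| := by rw [Real.exp_add]; ring
            _ = rexp (-L * u ^ 2 + -D * (x - b * u / D) ^ 2) * |u| := by rw [harg]
            _ = (rexp (-L * u ^ 2) * |u|) * rexp (-D * (x - b * u / D) ^ 2) := by
                rw [Real.exp_add]; ring
        simp_rw [hsq]
        rw [integral_const_mul, inner_gauss D (b * u / D)]
      simp_rw [hinner]
      rw [integral_mul_const]
      have h6 : (∫ u : ℝ, rexp (-L * u ^ 2) * |u|) = 1 / L := by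
        rw [← int_abs hLpos]
        simp_rw [mul_comm]
      rw [h6]
      -- final algebra
      set S : ℝ := Real.sqrt ((β / α) ^ 2 + σ ^ 2 + σ ^ 2 * (β / α) ^ 2) with hS
      have hS2 : S ^ 2 = (β / α) ^ 2 + σ ^ 2 + σ ^ 2 * (β / α) ^ 2 := by
        rw [hS]
        exact Real.sq_sqrt (by positivity)
      have hSpos : 0 < S := by
        rw [hS]
        apply Real.sqrt_pos.mpr
        have : 0 < (β / α) ^ 2 := pow_pos (div_pos hβp hα) 2
        positivity
      have hsqrtD : Real.sqrt (π / D) = Real.sqrt (2 * π) * σ * (β / α) / S := by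
        have hval : π / D = (Real.sqrt (2 * π) * σ * (β / α) / S) ^ 2 := by
          rw [div_pow, mul_pow, mul_pow, Real.sq_sqrt (by positivity : (0:ℝ) ≤ 2 * π), hS2,
            hD, hK, hb]
          field_simp
          ring
        rw [hval]
        apply Real.sqrt_sq
        have h0 : 0 < Real.sqrt (2 * π) := Real.sqrt_pos.mpr (by positivity)
        exact le_of_lt (div_pos (mul_pos (mul_pos h0 hσp) (div_pos hβp hα)) hSpos)
      have hLeq : L = (1 + (β / α) ^ 2) / (2 * S ^ 2) := by
        rw [hL, hD, hK, hb, hS2]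
        field_simp
        ring
      rw [hsqrtD, hLeq]
      have hsπ : Real.sqrt (2 * π) ≠ 0 := ne_of_gt (Real.sqrt_pos.mpr (by positivity))
      have h1ρ : (0:ℝ) < 1 + (β / α) ^ 2 := by positivity
      field_simp
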